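/- The map ν sending each G-semiorder P to the G-semiorientation O_P = {(u,v) : {u,v} ∈ E and u < v in P} is a bijection from the set of G-semiorders onto the set of G-semiorientations if and only if G is a complete graph (every two distinct vertices are adjacent). -/

import Mathlib

namespace Soap

variable {V : Type*} {W : Type*}

/-- A partial orientation of `G`: a relation `O` such that `O u v` implies `{u,v}` is an
edge and the reverse pair is not in `O`. -/
def IsPartialOrientation (G : SimpleGraph V) (O : V → V → Prop) : Prop :=
  ∀ u v, O u v → G.Adj u v ∧ ¬ O v u

/-- The edge `{u,v}` of `G` is blank for the partial orientation `O`. -/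
def IsBlank (G : SimpleGraph V) (O : V → V → Prop) (u v : V) : Prop :=
  G.Adj u v ∧ ¬ O u v ∧ ¬ O v u

/-- A `G`-semiorientation: a partial orientation such that every potential cycle
(a cycle of `G`, here traversed as `c : ZMod n → V`, none of whose edges is oriented
against the traversal) has strictly more blank edges than oriented edges. -/
def IsSemiorientation (G : SimpleGraph V) (O : V → V → Prop) : Prop :=
  IsPartialOrientation G O ∧
  ∀ (n : ℕ) (c : ZMod n → V), 3 ≤ n → Function.Injective c →
    (∀ i, G.Adj (c i) (c (i + 1))) →
    (∀ i, ¬ O (c (i + 1)) (c i)) →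
    {i : ZMod n | O (c i) (c (i + 1))}.ncard <
      {i : ZMod n | IsBlank G O (c i) (c (i + 1))}.ncard

/-- A semiorder (unit interval order) given by its strict order relation `lt`. -/
def IsSemiorder (lt : V → V → Prop) : Prop :=
  ∃ t : V → ℝ, ∀ u v, lt u v ↔ t u + 1 < t v

/-- Compatibility of a (semi)order `lt` and a partial orientation `O`:
for every edge `{u,v}`, `u < v` iff `(u,v) ∈ O`. -/
def Compatible (G : SimpleGraph V) (lt : V → V → Prop) (O : V → V → Prop) : Prop :=
  ∀ u v, G.Adj u v → (lt u v ↔ O u v)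

/-- Indegree of a vertex with respect to a partial orientation. -/
noncomputable def indeg (O : V → V → Prop) (v : V) : ℕ := {u | O u v}.ncard

/-- `n_P(v)`: the number of vertices `u` with `u < v` and `{u,v}` an edge of `G`. -/
noncomputable def nP (G : SimpleGraph V) (lt : V → V → Prop) (v : V) : ℕ :=
  {u | lt u v ∧ G.Adj u v}.ncard

/-- Degree of a vertex in a graph. -/
noncomputable def vdeg (H : SimpleGraph W) (v : W) : ℕ := {u | H.Adj v u}.ncard

/-- A configuration `c` on the graph `H` with sink `q` is superstable:
`c ≥ 0` off the sink, and no nonempty set `X` of nonsink vertices can be fired legally,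
i.e. `c - Δ̃·1_X ≥ 0` fails (coordinatewise off the sink), where
`(Δ̃·1_X)_v = deg(v)·1_X(v) - #{u ∈ X : u ∼ v}`. -/
def Superstable (H : SimpleGraph W) (q : W) (c : W → ℤ) : Prop :=
  (∀ v, v ≠ q → 0 ≤ c v) ∧
  ¬ ∃ X : Set W, X.Nonempty ∧ q ∉ X ∧
    ∀ v, v ≠ q →
      0 ≤ c v - X.indicator (fun u => (vdeg H u : ℤ)) v + ({u | u ∈ X ∧ H.Adj v u}.ncard : ℤ)

/-- `K(G)`: the graph `G` with a new vertex `none` adjoined, joined to every vertex of `G`. -/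
def KG (G : SimpleGraph V) : SimpleGraph (Option V) where
  Adj x y := x ≠ y ∧ ∀ u v, x = some u → y = some v → G.Adj u v
  symm := by
    constructor
    rintro x y ⟨hne, h⟩
    exact ⟨hne.symm, fun u v hu hv => (h v u hv hu).symm⟩
  loopless := by constructor; rintro x ⟨hne, -⟩; exact hne rfl

/-- A divisor `c : V → ℤ` on `G` is quasi-superstable if the configuration
`v ↦ c v + 1` on `K(G)` (with sink the new vertex) is superstable. -/
def QuasiSuperstable (G : SimpleGraph V) (c : V → ℤ) : Prop :=
  Superstable (KG G) none (fun x => x.elim 0 (fun v => c v + 1))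

/-- An acyclic orientation of `G`: a partial orientation in which every edge is
oriented and which contains no directed cycle. -/
def IsAcyclicOrientation (G : SimpleGraph V) (O : V → V → Prop) : Prop :=
  IsPartialOrientation G O ∧ (∀ u v, G.Adj u v → O u v ∨ O v u) ∧
  ¬ ∃ (n : ℕ) (c : ZMod n → V), 0 < n ∧ Function.Injective c ∧ ∀ i, O (c i) (c (i + 1))

/-- The union of the hyperplanes `x u - x v = 1` of the `G`-semiorder arrangement. -/
def hyperplanesUnion (G : SimpleGraph V) : Set (V → ℝ) :=
  {x | ∃ u v, G.Adj u v ∧ x u - x v = 1}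

/-- The regions of the `G`-semiorder arrangement: connected components of the
complement of the union of its hyperplanes. -/
def Regions (G : SimpleGraph V) : Set (Set (V → ℝ)) :=
  {r | ∃ x, x ∉ hyperplanesUnion G ∧ r = connectedComponentIn (hyperplanesUnion G)ᶜ x}

/-- The candidate region attached to a partial orientation `O`. -/
def rho (G : SimpleGraph V) (O : V → V → Prop) : Set (V → ℝ) :=
  {x | (∀ u v, O u v → x v - x u > 1) ∧ (∀ u v, IsBlank G O u v → |x u - x v| < 1)}

/-- `K(G)₀`: the graph `G` with an edge `{v, v₀}` added for each vertex `v ≠ v₀`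
not already adjacent to `v₀`. -/
def KG0 (G : SimpleGraph V) (v₀ : V) : SimpleGraph V where
  Adj u v := G.Adj u v ∨ (u ≠ v ∧ (u = v₀ ∨ v = v₀))
  symm := by
    constructor
    rintro u v (h | ⟨hne, h⟩)
    · exact Or.inl h.symm
    · exact Or.inr ⟨hne.symm, h.symm⟩
  loopless := by
    constructor
    rintro v (h | ⟨hne, -⟩)
    · exact G.ne_of_adj h rfl
    · exact hne rfl

/-- The union of the hyperplanes of the `(G,v₀)`-semiorder arrangement. -/
def hyperplanesUnion0 (G : SimpleGraph V) (v₀ : V) : Set ({v : V // v ≠ v₀} → ℝ) :=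
  {x | ∃ u v : {v : V // v ≠ v₀}, G.Adj u.1 v.1 ∧ x u - x v = 1}

/-- The regions of the `(G,v₀)`-semiorder arrangement. -/
def Regions0 (G : SimpleGraph V) (v₀ : V) : Set (Set ({v : V // v ≠ v₀} → ℝ)) :=
  {r | ∃ x, x ∉ hyperplanesUnion0 G v₀ ∧
    r = connectedComponentIn (hyperplanesUnion0 G v₀)ᶜ x}

/-- The candidate region attached to a partial orientation `O`, in the sink context. -/
def rho0 (G : SimpleGraph V) (v₀ : V) (O : V → V → Prop) :
    Set ({v : V // v ≠ v₀} → ℝ) :=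
  {x | (∀ u v : {v : V // v ≠ v₀}, O u.1 v.1 → x v - x u > 1) ∧
    (∀ u v : {v : V // v ≠ v₀}, IsBlank G O u.1 v.1 → |x u - x v| < 1)}

noncomputable def wt (w : V → V → ℝ) : List V → ℝ
  | [] => 0
  | [_] => 0
  | a :: b :: l => w a b + wt w (b :: l)

lemma wt_nil (w : V → V → ℝ) : wt w [] = 0 := rfl
lemma wt_single (w : V → V → ℝ) (a : V) : wt w [a] = 0 := rfl
lemma wt_cons_cons (w : V → V → ℝ) (a b : V) (l : List V) :
    wt w (a :: b :: l) = w a b + wt w (b :: l) := rfl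

lemma wt_append_cons (w : V → V → ℝ) (x : V) :
    ∀ (a b : List V), wt w (a ++ x :: b) = wt w (a ++ [x]) + wt w (x :: b)
  | [], b => by simp [wt_single]
  | [y], b => by simp [wt_cons_cons, wt_single]
  | y :: z :: a, b => by
    have := wt_append_cons w x (z :: a) b
    simp only [List.cons_append, wt_cons_cons] at this ⊢
    rw [this]; ring

lemma wt_concat (w : V → V → ℝ) :
    ∀ (l : List V) (hl : l ≠ []) (x : V),
      wt w (l ++ [x]) = wt w l + w (l.getLast hl) x
  | [y], _, x => by simp [wt_cons_cons, wt_single, wt_nil]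
  | y :: z :: t, _, x => by
    have := wt_concat w (z :: t) (by simp) x
    simp only [List.cons_append, wt_cons_cons] at this ⊢
    rw [this, List.getLast_cons_cons]  -- maybe name differs
    ring


lemma wt_eq_sum (w : V → V → ℝ) (d : V) :
    ∀ (l : List V), wt w l =
      ∑ j ∈ Finset.range (l.length - 1), w (l.getD j d) (l.getD (j + 1) d)
  | [] => by simp [wt_nil]
  | [a] => by simp [wt_single]
  | a :: b :: t => by
    rw [wt_cons_cons, wt_eq_sum w d (b :: t)]
    have h : (a :: b :: t).length - 1 = ((b :: t).length - 1) + 1 := by simp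
    rw [h, Finset.sum_range_succ']
    simp only [List.getD_cons_succ, List.getD_cons_zero]
    ring

noncomputable def eps (V : Type*) [Fintype V] : ℝ := 1 / (Fintype.card V + 1)

lemma eps_pos (V : Type*) [Fintype V] : 0 < eps V := by
  have : (0:ℝ) < (Fintype.card V : ℝ) + 1 := by positivity
  exact div_pos one_pos this

def arc (O : V → V → Prop) (u v : V) : Prop :=
  O u v ∨ (u ≠ v ∧ ¬ O u v ∧ ¬ O v u)

open Classical in
noncomputable def ww (O : V → V → Prop) (V' : Type*) [Fintype V'] : V → V → ℝ :=
  fun u v => if O u v then 1 + eps V' else -1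

lemma ww_of (O : V → V → Prop) (V' : Type*) [Fintype V'] {u v : V} (h : O u v) :
    ww O V' u v = 1 + eps V' := by simp [ww, h]

lemma ww_of_not (O : V → V → Prop) (V' : Type*) [Fintype V'] {u v : V} (h : ¬ O u v) :
    ww O V' u v = -1 := by simp [ww, h]

lemma arc_ne {G : SimpleGraph V} {O : V → V → Prop} (hpo : IsPartialOrientation G O)
    {u v : V} (h : arc O u v) : u ≠ v := by
  rcases h with h | h
  · exact (hpo u v h).1.ne
  · exact h.1

lemma cycle_sum_nonpos [Fintype V] {G : SimpleGraph V} {O : V → V → Prop}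
    (hcomp : ∀ u v : V, u ≠ v → G.Adj u v) (hO : IsSemiorientation G O)
    {n : ℕ} [NeZero n] (hn : 2 ≤ n) (c : ZMod n → V) (hc : Function.Injective c)
    (harc : ∀ i, arc O (c i) (c (i + 1))) :
    ∑ i : ZMod n, ww O V (c i) (c (i + 1)) ≤ 0 := by
  
  haveI : Fact (1 < n) := ⟨by omega⟩
  have hone : (1 : ZMod n) ≠ 0 := one_ne_zero
  have hne : ∀ i : ZMod n, c i ≠ c (i + 1) := by
    intro i h
    have := hc h
    exact hone (by linear_combination -this)
  have hadj : ∀ i, G.Adj (c i) (c (i + 1)) := fun i => hcomp _ _ (hne i)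
  have hnb : ∀ i, ¬ O (c (i + 1)) (c i) := by
    intro i
    rcases harc i with h | h
    · exact (hO.1 _ _ h).2
    · exact h.2.2
  classical
  by_cases hn3 : 3 ≤ n
  · have key := hO.2 n c hn3 hc hadj hnb
    set SO : Finset (ZMod n) := Finset.univ.filter (fun i => O (c i) (c (i + 1))) with hSO
    have hncard1 : {i : ZMod n | O (c i) (c (i + 1))}.ncard = SO.card := by
      rw [Set.ncard_eq_toFinset_card', Set.toFinset_setOf]
    have hblankiff : ∀ i : ZMod n,
        IsBlank G O (c i) (c (i + 1)) ↔ ¬ O (c i) (c (i + 1)) := by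
      intro i
      constructor
      · exact fun h => h.2.1
      · exact fun h => ⟨hadj i, h, hnb i⟩
    have hncard2 : {i : ZMod n | IsBlank G O (c i) (c (i + 1))}.ncard = SOᶜ.card := by
      rw [Set.ncard_eq_toFinset_card', Set.toFinset_setOf]
      congr 1
      ext i
      simp [hSO, hblankiff i]
    rw [hncard1, hncard2, Finset.card_compl, ZMod.card] at key
    have hkn : SO.card ≤ n := by
      have := Finset.card_le_card (Finset.subset_univ SO)
      simpa [ZMod.card] using this
    have hnN : n ≤ Fintype.card V := by
      have := Fintype.card_le_of_injective c hc
      simpa [ZMod.card] using this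
    have hsum : ∑ i : ZMod n, ww O V (c i) (c (i + 1)) =
        SO.card * (1 + eps V) + (n - SO.card : ℕ) * (-1) := by
      rw [← Finset.sum_filter_add_sum_filter_not Finset.univ
        (fun i => O (c i) (c (i + 1))) (fun i => ww O V (c i) (c (i + 1)))]
      have h1 : ∀ i ∈ SO, ww O V (c i) (c (i + 1)) = 1 + eps V := by
        intro i hi
        exact ww_of O V (by simpa [hSO] using hi)
      have h2 : ∀ i ∈ Finset.univ.filter (fun i => ¬ O (c i) (c (i + 1))),
          ww O V (c i) (c (i + 1)) = -1 := by
        intro i hi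
        exact ww_of_not O V (by simpa using hi)
      rw [Finset.sum_congr rfl h1, Finset.sum_congr rfl h2]
      simp only [Finset.sum_const, nsmul_eq_mul]
      have : (Finset.univ.filter (fun i => ¬ O (c i) (c (i + 1)))).card = SOᶜ.card := by
        congr 1
        ext i; simp [hSO]
      rw [this, Finset.card_compl, ZMod.card]
    rw [hsum]
    have hepsb : (SO.card : ℝ) * eps V ≤ 1 := by
      rw [eps]
      rw [mul_one_div, div_le_one (by positivity)]
      have : (SO.card : ℝ) ≤ (Fintype.card V : ℝ) := by
        exact_mod_cast hkn.trans hnN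
      linarith
    have h2k : (SO.card : ℝ) * 2 + 1 ≤ n := by
      have : SO.card * 2 + 1 ≤ n := by omega
      exact_mod_cast this
    have hcast : ((n - SO.card : ℕ) : ℝ) = (n : ℝ) - SO.card := by
      have : SO.card ≤ n := hkn
      push_cast [Nat.cast_sub this]
      ring
    rw [hcast]
    nlinarith [eps_pos V]
  · -- n = 2
    have hn2 : n = 2 := by omega
    have h2 : ∀ i : ZMod n, i + 1 + 1 = i := by
      intro i
      have : ((2 : ℕ) : ZMod n) = 0 := by
        rw [← ZMod.natCast_self n, hn2]
      push_cast at this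
      linear_combination this
    have hall : ∀ i : ZMod n, ww O V (c i) (c (i + 1)) = -1 := by
      intro i
      have := hnb (i + 1)
      rw [h2 i] at this
      exact ww_of_not O V this
    rw [Finset.sum_congr rfl (fun i _ => hall i)]
    simp



lemma list_cycle_nonpos [Fintype V] {G : SimpleGraph V} {O : V → V → Prop}
    (hcomp : ∀ u v : V, u ≠ v → G.Adj u v) (hO : IsSemiorientation G O)
    (d : V) (m : List V) (hne : m ≠ []) (hm : 2 ≤ m.length)
    (hnd : m.Nodup) (hch : m.Chain' (arc O))
    (hclose : arc O (m.getLast hne) (m.getD 0 d)) :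
    wt (ww O V) m + ww O V (m.getLast hne) (m.getD 0 d) ≤ 0 := by
  classical
  set n := m.length with hn
  haveI : NeZero n := ⟨by omega⟩
  haveI : Fact (1 < n) := ⟨by omega⟩
  set c : ZMod n → V := fun i => m.getD i.val d with hcdef
  have hvlt : ∀ i : ZMod n, i.val < n := fun i => ZMod.val_lt i
  have hgetc : ∀ i : ZMod n, c i = m.get ⟨i.val, hvlt i⟩ := by
    intro i
    rw [hcdef]
    exact List.getD_eq_get m d ⟨i.val, hvlt i⟩
  have hc : Function.Injective c := by
    intro i j h
    rw [hgetc, hgetc] at h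
    have := (List.nodup_iff_injective_get.mp hnd) h
    have hval : i.val = j.val := by simpa using this
    exact ZMod.val_injective n hval
  have hsucc : ∀ i : ZMod n, (i + 1).val = if i.val + 1 = n then 0 else i.val + 1 := by
    intro i
    rw [ZMod.val_add, ZMod.val_one]
    by_cases h : i.val + 1 = n
    · simp [h]
    · rw [if_neg h, Nat.mod_eq_of_lt (by have := hvlt i; omega)]
  have hchain : ∀ (j : ℕ) (hj : j + 1 < n), arc O (m.getD j d) (m.getD (j + 1) d) := by
    intro j hj
    rw [List.getD_eq_getElem m d (by omega : j < m.length), List.getD_eq_getElem m d (by omega : j + 1 < m.length)]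
    exact List.isChain_iff_getElem.mp hch j (by omega)
  have hlastD : m.getLast hne = m.getD (n - 1) d := by
    rw [List.getD_eq_getElem m d (by omega : n - 1 < m.length)]
    exact List.getLast_eq_getElem hne
  have harc : ∀ i : ZMod n, arc O (c i) (c (i + 1)) := by
    intro i
    rw [hcdef]
    simp only
    rw [hsucc i]
    by_cases h : i.val + 1 = n
    · rw [if_pos h]
      have : i.val = n - 1 := by omega
      rw [this, ← hlastD]
      exact hclose
    · rw [if_neg h]
      exact hchain i.val (by have := hvlt i; omega)
  have hkey := cycle_sum_nonpos hcomp hO (by omega : 2 ≤ n) c hc harc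
  -- now identify the sum with wt m + closing weight
  have hsum : ∑ i : ZMod n, ww O V (c i) (c (i + 1)) =
      wt (ww O V) m + ww O V (m.getLast hne) (m.getD 0 d) := by
    have h12 : ∑ i : ZMod n, ww O V (c i) (c (i + 1)) =
        ∑ j ∈ Finset.range n, ww O V (c ((j : ZMod n))) (c ((j : ZMod n) + 1)) := by
      refine Finset.sum_nbij' (fun i : ZMod n => i.val) (fun j : ℕ => (j : ZMod n))
        ?_ ?_ ?_ ?_ ?_
      · intro a _; exact Finset.mem_range.mpr (hvlt a)
      · intro a _; exact Finset.mem_univ _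
      · intro a _; exact ZMod.natCast_rightInverse a
      · intro a ha; exact ZMod.val_cast_of_lt (Finset.mem_range.mp ha)
      · intro a _
        rw [show ((a.val : ℕ) : ZMod n) = a from ZMod.natCast_rightInverse a]
    have hcj : ∀ j : ℕ, j < n → c ((j : ZMod n)) = m.getD j d := by
      intro j hj
      rw [hcdef]
      simp only
      rw [ZMod.val_cast_of_lt hj]
    have h3 : ∀ j ∈ Finset.range (n - 1),
        ww O V (c ((j : ZMod n))) (c ((j : ZMod n) + 1)) =
          ww O V (m.getD j d) (m.getD (j + 1) d) := by
      intro j hj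
      rw [Finset.mem_range] at hj
      have hj1 : j + 1 < n := by omega
      have : (j : ZMod n) + 1 = ((j + 1 : ℕ) : ZMod n) := by push_cast; ring
      rw [hcj j (by omega), this, hcj (j + 1) hj1]
    have hlast : ww O V (c (((n - 1 : ℕ) : ZMod n))) (c (((n - 1 : ℕ) : ZMod n) + 1)) =
        ww O V (m.getLast hne) (m.getD 0 d) := by
      have hn1 : n - 1 < n := by omega
      have hv : ((n - 1 : ℕ) : ZMod n).val = n - 1 := ZMod.val_cast_of_lt hn1
      have hnext : (((n - 1 : ℕ) : ZMod n) + 1).val = 0 := by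
        rw [hsucc]
        rw [hv, if_pos (by omega)]
      rw [hcj (n - 1) hn1, ← hlastD]
      congr 1
      rw [hcdef]
      simp only
      rw [hnext]
    rw [h12]
    have hnsplit : n = (n - 1) + 1 := by omega
    have hrange : Finset.range n = insert (n - 1) (Finset.range (n - 1)) := by
      conv_lhs => rw [hnsplit]
      exact Finset.range_add_one
    rw [hrange, Finset.sum_insert (by simp)]
    rw [Finset.sum_congr rfl h3]
    rw [hlast, wt_eq_sum (ww O V) d m, ← hn]
    ring
  rw [← hsum]
  exact hkey

def good (O : V → V → Prop) (v : V) : Set (List V) :=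
  {l | l ≠ [] ∧ l.getLast? = some v ∧ l.Nodup ∧ l.Chain' (arc O)}

noncomputable def tfun [Fintype V] (O : V → V → Prop) (v : V) : ℝ :=
  sSup (wt (ww O V) '' good O v)

lemma good_image_finite [Fintype V] (O : V → V → Prop) (v : V) :
    (wt (ww O V) '' good O v).Finite := by
  refine Set.Finite.image _ (Set.Finite.subset (List.finite_length_le V (Fintype.card V)) ?_)
  intro l hl
  exact hl.2.2.1.length_le_card

lemma singleton_mem_good (O : V → V → Prop) (v : V) : [v] ∈ good O v :=
  ⟨List.cons_ne_nil v [], by simp, List.nodup_singleton v, List.isChain_singleton v⟩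

lemma le_tfun [Fintype V] (O : V → V → Prop) {v : V} {l : List V} (hl : l ∈ good O v) :
    wt (ww O V) l ≤ tfun O v :=
  le_csSup (good_image_finite O v).bddAbove ⟨l, hl, rfl⟩

lemma tfun_mem [Fintype V] (O : V → V → Prop) (v : V) :
    ∃ l ∈ good O v, wt (ww O V) l = tfun O v := by
  have hne : (wt (ww O V) '' good O v).Nonempty :=
    ⟨_, ⟨[v], singleton_mem_good O v, rfl⟩⟩
  have := hne.csSup_mem (good_image_finite O v)
  obtain ⟨l, hl, hwl⟩ := this
  exact ⟨l, hl, hwl⟩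

lemma tfun_triangle [Fintype V] {G : SimpleGraph V} {O : V → V → Prop}
    (hcomp : ∀ u v : V, u ≠ v → G.Adj u v) (hO : IsSemiorientation G O)
    {u v : V} (h : arc O u v) :
    tfun O u + ww O V u v ≤ tfun O v := by
  classical
  obtain ⟨l, ⟨hlne, hlast, hnd, hch⟩, hwl⟩ := tfun_mem O u
  have huv : u ≠ v := arc_ne hO.1 h
  have hlastu : l.getLast hlne = u := by
    rw [List.getLast?_eq_getLast hlne] at hlast
    exact Option.some_injective _ hlast
  by_cases hv : v ∈ l
  · obtain ⟨l₁, l₂, rfl⟩ := List.append_of_mem hv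
    have hl₂ : l₂ ≠ [] := by
      rintro rfl
      rw [List.getLast?_concat] at hlast
      exact huv ((Option.some_injective _ hlast).symm)
    have hpre : List.Chain' (arc O) (l₁ ++ [v]) :=
      hch.prefix ⟨l₂, by simp⟩
    have hsuf : List.Chain' (arc O) (v :: l₂) :=
      hch.suffix ⟨l₁, rfl⟩
    have nodpre : (l₁ ++ [v]).Nodup :=
      List.Nodup.sublist (List.IsPrefix.sublist ⟨l₂, by simp⟩) hnd
    have nodsuf : (v :: l₂).Nodup :=
      List.Nodup.sublist (List.IsSuffix.sublist ⟨l₁, rfl⟩) hnd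
    have hlast2 : (v :: l₂).getLast (List.cons_ne_nil v l₂) = u := by
      have h1 : (l₁ ++ v :: l₂).getLast? = (v :: l₂).getLast? :=
        List.getLast?_append_of_ne_nil l₁ (List.cons_ne_nil v l₂)
      rw [h1, List.getLast?_eq_getLast (List.cons_ne_nil v l₂)] at hlast
      exact Option.some_injective _ hlast
    have hD0 : (v :: l₂).getD 0 v = v := List.getD_cons_zero
    have hlen : 2 ≤ (v :: l₂).length := by
      have := List.length_pos_iff.mpr hl₂
      simp only [List.length_cons]
      omega
    have hcyc := list_cycle_nonpos hcomp hO v (v :: l₂) (List.cons_ne_nil v l₂)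
      hlen nodsuf hsuf (by rw [hlast2, hD0]; exact h)
    rw [hlast2, hD0] at hcyc
    have hgood : (l₁ ++ [v]) ∈ good O v :=
      ⟨by simp, List.getLast?_concat, nodpre, hpre⟩
    have hle := le_tfun O hgood
    have hsplit : wt (ww O V) (l₁ ++ v :: l₂) =
        wt (ww O V) (l₁ ++ [v]) + wt (ww O V) (v :: l₂) := wt_append_cons _ _ _ _
    rw [hsplit] at hwl
    linarith
  · have hdisj : l.Disjoint [v] := by
      intro a ha hb
      rw [List.mem_singleton] at hb
      subst hb
      exact hv ha
    have hgood : (l ++ [v]) ∈ good O v := by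
      refine ⟨by simp, List.getLast?_concat, List.Nodup.append hnd (List.nodup_singleton v) hdisj, ?_⟩
      refine List.IsChain.append hch (List.isChain_singleton v) ?_
      intro x hx y hy
      rw [hlast] at hx
      rw [List.head?_cons] at hy
      have hxu : x = u := by simpa using hx.symm
      have hyv : y = v := by simpa using hy.symm
      rw [hxu, hyv]
      exact h
    have hle := le_tfun O hgood
    rw [wt_concat (ww O V) l hlne v, hlastu, hwl] at hle
    exact hle

lemma tfun_spec [Fintype V] {G : SimpleGraph V} {O : V → V → Prop}
    (hcomp : ∀ u v : V, u ≠ v → G.Adj u v) (hO : IsSemiorientation G O)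
    (u v : V) : O u v ↔ tfun O u + 1 < tfun O v := by
  constructor
  · intro h
    have := tfun_triangle hcomp hO (Or.inl h)
    rw [ww_of O V h] at this
    have := eps_pos V
    linarith
  · intro hlt
    by_contra hno
    have hvle : tfun O v ≤ tfun O u + 1 := by
      by_cases hO' : O v u
      · have := tfun_triangle hcomp hO (Or.inl hO')
        rw [ww_of O V hO'] at this
        have := eps_pos V
        linarith
      · by_cases heq : u = v
        · subst heq; linarith
        · have harc : arc O v u := Or.inr ⟨fun h' => heq h'.symm, hO', hno⟩
          have := tfun_triangle hcomp hO harc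
          rw [ww_of_not O V hO'] at this
          linarith
    linarith

lemma semiorder_orientation {V : Type*} (G : SimpleGraph V) {lt : V → V → Prop}
    (hlt : IsSemiorder lt) :
    IsSemiorientation G (fun u v => G.Adj u v ∧ lt u v) := by
  obtain ⟨t, ht⟩ := hlt
  constructor
  · rintro u v ⟨ha, hl⟩
    refine ⟨ha, ?_⟩
    rintro ⟨-, hl'⟩
    rw [ht] at hl hl'
    linarith
  · intro n c hn hc hadj hnb
    haveI : NeZero n := ⟨by omega⟩
    classical
    have hnb' : ∀ i, ¬ lt (c (i + 1)) (c i) := fun i h => hnb i ⟨(hadj i).symm, h⟩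
    set P : ZMod n → Prop := fun i => lt (c i) (c (i + 1)) with hP
    have e1 : {i : ZMod n | G.Adj (c i) (c (i + 1)) ∧ lt (c i) (c (i + 1))}.ncard =
        (Finset.univ.filter P).card := by
      rw [Set.ncard_eq_toFinset_card', Set.toFinset_setOf]
      congr 1
      ext i
      simp only [Finset.mem_filter, Finset.mem_univ, true_and, hP]
      exact ⟨fun h => h.2, fun h => ⟨hadj i, h⟩⟩
    have e2 : {i : ZMod n | IsBlank G (fun u v => G.Adj u v ∧ lt u v) (c i) (c (i + 1))}.ncard =
        (Finset.univ.filter (fun i => ¬ P i)).card := by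
      rw [Set.ncard_eq_toFinset_card', Set.toFinset_setOf]
      congr 1
      ext i
      simp only [Finset.mem_filter, Finset.mem_univ, true_and, hP]
      constructor
      · intro hb hp
        exact hb.2.1 ⟨hadj i, hp⟩
      · intro hp
        exact ⟨hadj i, fun h => hp h.2, fun h => hnb' i h.2⟩
    rw [e1, e2]
    have tele : ∑ i : ZMod n, (t (c (i + 1)) - t (c i)) = 0 := by
      rw [Finset.sum_sub_distrib, sub_eq_zero]
      exact Fintype.sum_equiv (Equiv.addRight (1 : ZMod n)) _ _ (fun i => rfl)
    by_cases hk : (Finset.univ.filter P) = ∅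
    · rw [hk]
      simp only [Finset.card_empty]
      rw [Finset.card_pos]
      refine ⟨0, ?_⟩
      simp only [Finset.mem_filter, Finset.mem_univ, true_and]
      intro hp
      have : (0 : ZMod n) ∈ Finset.univ.filter P := by
        simp only [Finset.mem_filter, Finset.mem_univ, true_and]
        exact hp
      rw [hk] at this
      exact absurd this (Finset.notMem_empty _)
    · have hne : (Finset.univ.filter P).Nonempty := Finset.nonempty_of_ne_empty hk
      have h1 : ((Finset.univ.filter P).card : ℝ) <
          ∑ i ∈ Finset.univ.filter P, (t (c (i + 1)) - t (c i)) := by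
        have := Finset.sum_lt_sum_of_nonempty hne
          (f := fun _ => (1 : ℝ)) (g := fun i => t (c (i + 1)) - t (c i)) ?_
        · simpa using this
        · intro i hi
          simp only [Finset.mem_filter, hP] at hi
          have := (ht (c i) (c (i + 1))).mp hi.2
          show (1 : ℝ) < t (c (i + 1)) - t (c i)
          linarith
      have h2 : -(((Finset.univ.filter (fun i => ¬ P i)).card : ℝ)) ≤
          ∑ i ∈ Finset.univ.filter (fun i => ¬ P i), (t (c (i + 1)) - t (c i)) := by
        have := Finset.sum_le_sum
          (f := fun _ => (-1 : ℝ)) (g := fun i => t (c (i + 1)) - t (c i))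
          (s := Finset.univ.filter (fun i => ¬ P i)) ?_
        · simpa using this
        · intro i _
          have hnl := hnb' i
          rw [ht] at hnl
          push_neg at hnl
          show (-1 : ℝ) ≤ t (c (i + 1)) - t (c i)
          linarith
      have hsplit : ∑ i ∈ Finset.univ.filter P, (t (c (i + 1)) - t (c i)) +
          ∑ i ∈ Finset.univ.filter (fun i => ¬ P i), (t (c (i + 1)) - t (c i)) = 0 := by
        rw [Finset.sum_filter_add_sum_filter_not]
        exact tele
      have : ((Finset.univ.filter P).card : ℝ) <
          ((Finset.univ.filter (fun i => ¬ P i)).card : ℝ) := by linarith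
      exact_mod_cast this


/-- The map `ν : P ↦ O_P` from `G`-semiorders to `G`-semiorientations is a bijection
iff `G` is a complete graph. -/
theorem stmt13 {V : Type*} [Fintype V] (G : SimpleGraph V) (hconn : G.Connected) :
    Set.BijOn (fun (lt : V → V → Prop) (u v : V) => G.Adj u v ∧ lt u v)
      {lt : V → V → Prop | IsSemiorder lt}
      {O : V → V → Prop | IsSemiorientation G O} ↔
    ∀ u v : V, u ≠ v → G.Adj u v := by
  classical
  constructor
  · intro hbij
    by_contra hnc
    push_neg at hnc
    obtain ⟨u, v, huv, hna⟩ := hnc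
    set lt1 : V → V → Prop := fun _ _ => False with hlt1
    set lt2 : V → V → Prop := fun a b => a = u ∧ b = v with hlt2
    have h1 : IsSemiorder lt1 := by
      refine ⟨fun _ => 0, fun a b => ?_⟩
      simp only [hlt1]
      constructor
      · intro h; exact h.elim
      · intro h; norm_num at h
    have h2 : IsSemiorder lt2 := by
      refine ⟨fun x => if x = u then 0 else if x = v then 2 else 1, fun a b => ?_⟩
      simp only [hlt2]
      constructor
      · rintro ⟨rfl, rfl⟩
        rw [if_pos rfl, if_neg (Ne.symm huv), if_pos rfl]
        norm_num
      · intro hlt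
        by_cases ha : a = u
        · by_cases hb : b = v
          · exact ⟨ha, hb⟩
          · exfalso
            rw [ha, if_pos rfl] at hlt
            by_cases hbu : b = u
            · rw [hbu, if_pos rfl] at hlt; norm_num at hlt
            · rw [if_neg hbu, if_neg hb] at hlt; norm_num at hlt
        · exfalso
          have hta : (if a = u then (0:ℝ) else if a = v then 2 else 1) ≥ 1 := by
            rw [if_neg ha]; split_ifs <;> norm_num
          have htb : (if b = u then (0:ℝ) else if b = v then 2 else 1) ≤ 2 := by
            split_ifs <;> norm_num
          linarith
    have himg : (fun (a b : V) => G.Adj a b ∧ lt1 a b) =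
        (fun (a b : V) => G.Adj a b ∧ lt2 a b) := by
      funext a b
      apply propext
      constructor
      · rintro ⟨-, h⟩
        exact h.elim
      · rintro ⟨hadj, hh⟩
        simp only [hlt2] at hh
        obtain ⟨rfl, rfl⟩ := hh
        exact absurd hadj hna
    have heq12 : lt1 = lt2 := hbij.2.1 h1 h2 himg
    have : lt1 u v := by
      rw [heq12]
      exact ⟨rfl, rfl⟩
    exact this
  · intro hcomp
    refine ⟨?_, ?_, ?_⟩
    · intro lt hlt
      exact semiorder_orientation G hlt
    · intro lt1 h1 lt2 h2 heq
      obtain ⟨t1, ht1⟩ := h1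
      obtain ⟨t2, ht2⟩ := h2
      funext a b
      apply propext
      by_cases hab : a = b
      · subst hab
        exact iff_of_false (fun h => by rw [ht1] at h; linarith)
          (fun h => by rw [ht2] at h; linarith)
      · have hadj := hcomp a b hab
        have hiff : (G.Adj a b ∧ lt1 a b) = (G.Adj a b ∧ lt2 a b) :=
          congrFun (congrFun heq a) b
        constructor
        · intro h
          exact (hiff ▸ (⟨hadj, h⟩ : G.Adj a b ∧ lt1 a b)).2
        · intro h
          exact (hiff.symm ▸ (⟨hadj, h⟩ : G.Adj a b ∧ lt2 a b)).2
    · intro O hO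
      exact ⟨O, ⟨tfun O, fun a b => tfun_spec hcomp hO a b⟩,
        funext fun a => funext fun b => propext
          ⟨fun h => h.2, fun h => ⟨(hO.1 a b h).1, h⟩⟩⟩

end Soap
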